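/- arXiv:2411.13506 — 3 statements merged into one kernel-verified Lean document; each statement's English description precedes it below -/
import Mathlib

section
/- Let p ∈ ℕ, let P_0, …, P_p ∈ ℝ^n be control points with associated Bézier curve B(t) = Σ_{j=0}^{p} (p choose j) t^j (1−t)^{p−j} P_j, and let a, b ∈ ℝ with a < b. Then there exist control points Q_0, …, Q_p ∈ ℝ^n such that for all t ∈ ℝ, B(a + (b − a)t) = Σ_{j=0}^{p} (p choose j) t^j (1−t)^{p−j} Q_j; that is, the affinely reparametrized segment of a Bézier curve of order p is again a Bézier curve of order p. -/
/-- The Bézier curve on `[0,1]` with control points `P 0, …, P p`. -/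
noncomputable def bezier {n p : ℕ} (P : Fin (p + 1) → (Fin n → ℝ)) (t : ℝ) : Fin n → ℝ :=
  ∑ j : Fin (p + 1), ((p.choose (j : ℕ) : ℝ) * t ^ (j : ℕ) * (1 - t) ^ (p - (j : ℕ))) • P j

/-- Expansion of a monomial `t^k`, `k ≤ p`, in the Bernstein basis of order `p`. -/
lemma bern_monomial (p k : ℕ) (hk : k ≤ p) (t : ℝ) :
    ∑ j ∈ Finset.range (p + 1),
      ((p.choose j : ℝ) * t ^ j * (1 - t) ^ (p - j)) * ((j.choose k : ℝ) / (p.choose k : ℝ))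
      = t ^ k := by
  have hc : (0 : ℝ) < (p.choose k : ℝ) := by
    exact_mod_cast Nat.choose_pos hk
  have key : ∑ j ∈ Finset.range (p + 1),
      ((p.choose j * j.choose k : ℕ) : ℝ) * t ^ j * (1 - t) ^ (p - j)
      = (p.choose k : ℝ) * t ^ k := by
    have hsub : Finset.Ico k (p + 1) ⊆ Finset.range (p + 1) := by
      intro x hx
      simp only [Finset.mem_Ico] at hx
      simpa using hx.2
    rw [← Finset.sum_subset hsub]
    · rw [Finset.sum_Ico_eq_sum_range]
      have hlen : p + 1 - k = (p - k) + 1 := by omega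
      rw [hlen]
      have : ∀ m ∈ Finset.range ((p - k) + 1),
          ((p.choose (k + m) * (k + m).choose k : ℕ) : ℝ) * t ^ (k + m) * (1 - t) ^ (p - (k + m))
          = (p.choose k : ℝ) * t ^ k * (t ^ m * (1 - t) ^ ((p - k) - m) * ((p - k).choose m : ℝ)) := by
        intro m hm
        simp only [Finset.mem_range] at hm
        have hkm : k + m ≤ p := by omega
        have hck : Nat.choose p (k + m) * Nat.choose (k + m) k
            = Nat.choose p k * Nat.choose (p - k) ((k + m) - k) :=
          Nat.choose_mul (Nat.le_add_right k m)
        have h1 : (k + m) - k = m := by omega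
        have h2 : p - (k + m) = (p - k) - m := by omega
        rw [h1] at hck
        rw [hck, h2]
        push_cast
        rw [pow_add]
        ring
      rw [Finset.sum_congr rfl this, ← Finset.mul_sum, ← add_pow t (1 - t) (p - k)]
      simp
    · intro x hx hx'
      simp only [Finset.mem_range] at hx
      simp only [Finset.mem_Ico] at hx'
      have : x < k := by omega
      simp [Nat.choose_eq_zero_of_lt this]
  have expand : ∀ j ∈ Finset.range (p + 1),
      ((p.choose j : ℝ) * t ^ j * (1 - t) ^ (p - j)) * ((j.choose k : ℝ) / (p.choose k : ℝ))
      = ((p.choose j * j.choose k : ℕ) : ℝ) * t ^ j * (1 - t) ^ (p - j) / (p.choose k : ℝ) := by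
    intro j _
    push_cast
    ring
  rw [Finset.sum_congr rfl expand, ← Finset.sum_div, key]
  field_simp

/-- Splitting property: the affinely reparametrized segment `t ↦ B(a + (b - a) t)` of a
Bézier curve of order `p` is again a Bézier curve of order `p` for some control points
`Q_0, …, Q_p`. -/
theorem bezier_splitting {n p : ℕ} (P : Fin (p + 1) → (Fin n → ℝ)) (a b : ℝ) (hab : a < b) :
    ∃ Q : Fin (p + 1) → (Fin n → ℝ),
      ∀ t : ℝ, bezier P (a + (b - a) * t) = bezier Q t := by
  classical
  -- the reparametrized Bernstein polynomial of index `i`, as a polynomial in `t`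
  set L : Polynomial ℝ := Polynomial.C a + Polynomial.C (b - a) * Polynomial.X with hL
  set f : Fin (p + 1) → Polynomial ℝ := fun i => (bernsteinPolynomial ℝ p i).comp L with hf
  have hdeg : ∀ i : Fin (p + 1), (f i).natDegree < p + 1 := by
    intro i
    have h1 : (bernsteinPolynomial ℝ p i).natDegree ≤ p := by
      rw [bernsteinPolynomial]
      refine le_trans (Polynomial.natDegree_mul_le) ?_
      have hXp : (Polynomial.X ^ (i : ℕ) : Polynomial ℝ).natDegree ≤ (i : ℕ) :=
        le_of_eq (Polynomial.natDegree_X_pow _)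
      have h1X : ((1 - Polynomial.X : Polynomial ℝ) ^ (p - (i : ℕ))).natDegree ≤ p - (i : ℕ) := by
        refine le_trans (Polynomial.natDegree_pow_le) ?_
        have : (1 - Polynomial.X : Polynomial ℝ).natDegree ≤ 1 := by
          refine le_trans (Polynomial.natDegree_sub_le _ _) ?_
          simp
        nlinarith
      have hmul : ((Nat.choose p i : Polynomial ℝ) * Polynomial.X ^ (i : ℕ)).natDegree ≤ (i : ℕ) := by
        refine le_trans (Polynomial.natDegree_mul_le) ?_
        simpa using hXp
      have hi : (i : ℕ) ≤ p := by omega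
      omega
    have h2 : L.natDegree ≤ 1 := by
      rw [hL]
      refine le_trans (Polynomial.natDegree_add_le _ _) ?_
      simp only [Polynomial.natDegree_C, max_le_iff]
      constructor
      · omega
      · refine le_trans (Polynomial.natDegree_mul_le) ?_
        simp
    have := Polynomial.natDegree_comp_le (p := bernsteinPolynomial ℝ p i) (q := L)
    have : (f i).natDegree ≤ p * 1 := by
      rw [hf]
      calc ((bernsteinPolynomial ℝ p i).comp L).natDegree
          ≤ (bernsteinPolynomial ℝ p i).natDegree * L.natDegree := Polynomial.natDegree_comp_le
        _ ≤ p * 1 := Nat.mul_le_mul h1 h2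
    omega
  refine ⟨fun j => ∑ i : Fin (p + 1),
      (∑ k ∈ Finset.range (p + 1),
        (f i).coeff k * (((j : ℕ).choose k : ℝ) / (p.choose k : ℝ))) • P i, fun t => ?_⟩
  have hLeval : L.eval t = a + (b - a) * t := by simp [hL]
  -- evaluate each reparametrized Bernstein polynomial via its coefficients
  have heval : ∀ i : Fin (p + 1),
      (p.choose (i : ℕ) : ℝ) * (a + (b - a) * t) ^ (i : ℕ)
        * (1 - (a + (b - a) * t)) ^ (p - (i : ℕ))
      = ∑ k ∈ Finset.range (p + 1), (f i).coeff k * t ^ k := by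
    intro i
    have h1 : (f i).eval t = (bernsteinPolynomial ℝ p i).eval (a + (b - a) * t) := by
      rw [hf]
      simp only [Polynomial.eval_comp, hLeval]
    have h2 : (bernsteinPolynomial ℝ p i).eval (a + (b - a) * t)
        = (p.choose (i : ℕ) : ℝ) * (a + (b - a) * t) ^ (i : ℕ)
          * (1 - (a + (b - a) * t)) ^ (p - (i : ℕ)) := by
      simp [bernsteinPolynomial]
    rw [← h2, ← h1, Polynomial.eval_eq_sum_range' (hdeg i)]
  funext x
  simp only [bezier, Finset.sum_apply, Pi.smul_apply, smul_eq_mul, Finset.smul_sum,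
    Finset.sum_smul]
  rw [Finset.sum_comm]
  refine Finset.sum_congr rfl fun i _ => ?_
  rw [heval i]
  have hswap : ∑ j : Fin (p + 1),
      ((p.choose (j : ℕ) : ℝ) * t ^ (j : ℕ) * (1 - t) ^ (p - (j : ℕ)))
        * (∑ k ∈ Finset.range (p + 1),
            (f i).coeff k * (((j : ℕ).choose k : ℝ) / (p.choose k : ℝ)))
      = ∑ k ∈ Finset.range (p + 1), (f i).coeff k * t ^ k := by
    simp_rw [Finset.mul_sum]
    rw [Finset.sum_comm]
    refine Finset.sum_congr rfl fun k hk => ?_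
    simp only [Finset.mem_range] at hk
    have hkp : k ≤ p := by omega
    have hmono := bern_monomial p k hkp t
    rw [← Fin.sum_univ_eq_sum_range
      (fun j => ((p.choose j : ℝ) * t ^ j * (1 - t) ^ (p - j))
        * ((j.choose k : ℝ) / (p.choose k : ℝ)))] at hmono
    calc ∑ j : Fin (p + 1),
        ((p.choose (j : ℕ) : ℝ) * t ^ (j : ℕ) * (1 - t) ^ (p - (j : ℕ)))
          * ((f i).coeff k * (((j : ℕ).choose k : ℝ) / (p.choose k : ℝ)))
        = (f i).coeff k * ∑ j : Fin (p + 1),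
            ((p.choose (j : ℕ) : ℝ) * t ^ (j : ℕ) * (1 - t) ^ (p - (j : ℕ)))
              * (((j : ℕ).choose k : ℝ) / (p.choose k : ℝ)) := by
          rw [Finset.mul_sum]; exact Finset.sum_congr rfl fun j _ => by ring
      _ = (f i).coeff k * t ^ k := by rw [hmono]
  rw [← hswap, Finset.sum_mul]
  refine Finset.sum_congr rfl fun j _ => ?_
  rw [mul_assoc, Finset.sum_mul, Finset.mul_sum]
end

section
/- Equip ℝ^N, ℝ^n, ℝ^m, ℝ^M with the supremum (ℓ∞) norm. Let k : ℝ^N × ℝ^n × ℝ^m → ℝ^M satisfy ‖k(x, y, u) − k(x', y', u')‖ ≤ L_k (‖x − x'‖ + ‖y − y'‖ + ‖u − u'‖) for all arguments, let Ψ : ℝ^n → ℝ^N be Lipschitz with constant L_Ψ, and let e : ℝ^m → ℝ be a nonnegative function that is Lipschitz with constant L_e. Let u_max > 0, let x ∈ ℝ^N, x_d, x̄_d ∈ ℝ^n, u_d ∈ ℝ^m, and suppose the tracking bound ‖x − Ψ(x_d)‖ ≤ e(u_d) holds. If L_k (1 + L_Ψ) ‖x_d − x̄_d‖ + L_k (1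 + L_e) ‖u_d‖ ≤ u_max − ‖k(Ψ(x̄_d), x̄_d, 0)‖ − L_k e(0), then ‖k(x, x_d, u_d)‖ ≤ u_max. -/
/-- Lemma 1 (input constraint satisfaction): with all spaces carrying the sup norm, if the
tracking controller `k` is Lipschitz, `Ψ` is Lipschitz, the tracking-certificate bound `e`
is nonnegative and Lipschitz, the closed-loop state satisfies `‖x - Ψ(x_d)‖ ≤ e(u_d)`, and
`L_k (1 + L_Ψ) ‖x_d - x̄_d‖ + L_k (1 + L_e) ‖u_d‖ ≤ u_max - ‖k(Ψ(x̄_d), x̄_d, 0)‖ - L_k e(0)`,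
then `‖k(x, x_d, u_d)‖ ≤ u_max`. -/
theorem input_constraint_satisfaction
    {N n m M : ℕ}
    (k : (Fin N → ℝ) → (Fin n → ℝ) → (Fin m → ℝ) → (Fin M → ℝ))
    (Ψ : (Fin n → ℝ) → (Fin N → ℝ)) (e : (Fin m → ℝ) → ℝ)
    (Lk LΨ Le : ℝ) (hLk : 0 ≤ Lk) (hLΨ : 0 ≤ LΨ) (hLe : 0 ≤ Le)
    (hk : ∀ x x' y y' u u', ‖k x y u - k x' y' u'‖ ≤ Lk * (‖x - x'‖ + ‖y - y'‖ + ‖u - u'‖))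
    (hΨ : ∀ y y', ‖Ψ y - Ψ y'‖ ≤ LΨ * ‖y - y'‖)
    (he_nonneg : ∀ u, 0 ≤ e u)
    (he : ∀ u u', |e u - e u'| ≤ Le * ‖u - u'‖)
    (umax : ℝ) (humax : 0 < umax)
    (x : Fin N → ℝ) (xd xbar : Fin n → ℝ) (ud : Fin m → ℝ)
    (htrack : ‖x - Ψ xd‖ ≤ e ud)
    (hconstraint : Lk * (1 + LΨ) * ‖xd - xbar‖ + Lk * (1 + Le) * ‖ud‖ ≤
      umax - ‖k (Ψ xbar) xbar 0‖ - Lk * e 0) :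
    ‖k x xd ud‖ ≤ umax := by
  have h1 : ‖k x xd ud‖ ≤ ‖k x xd ud - k (Ψ xbar) xbar 0‖ + ‖k (Ψ xbar) xbar 0‖ := by
    simpa using norm_add_le (k x xd ud - k (Ψ xbar) xbar 0) (k (Ψ xbar) xbar 0)
  have h2 := hk x (Ψ xbar) xd xbar ud 0
  have h3 : ‖x - Ψ xbar‖ ≤ ‖x - Ψ xd‖ + ‖Ψ xd - Ψ xbar‖ := by
    simpa using norm_add_le (x - Ψ xd) (Ψ xd - Ψ xbar)
  have h4 := hΨ xd xbar
  have h5 : e ud ≤ e 0 + Le * ‖ud‖ := by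
    have := he ud 0
    have := abs_le.mp this
    simp only [sub_zero] at this
    linarith [this.2]
  have h6 : ‖x - Ψ xbar‖ ≤ e 0 + Le * ‖ud‖ + LΨ * ‖xd - xbar‖ := by linarith
  have h7 : ‖k x xd ud - k (Ψ xbar) xbar 0‖ ≤
      Lk * (e 0 + Le * ‖ud‖ + LΨ * ‖xd - xbar‖ + ‖xd - xbar‖ + ‖ud‖) := by
    calc ‖k x xd ud - k (Ψ xbar) xbar 0‖ ≤ Lk * (‖x - Ψ xbar‖ + ‖xd - xbar‖ + ‖ud - 0‖) := h2
      _ ≤ Lk * (e 0 + Le * ‖ud‖ + LΨ * ‖xd - xbar‖ + ‖xd - xbar‖ + ‖ud‖) := by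
          apply mul_le_mul_of_nonneg_left _ hLk
          simp only [sub_zero]
          linarith
  nlinarith [h1, h7, hconstraint]
end

section
/- Let ℝ^N and ℝ^n carry the Euclidean norm and ℝ^m the supremum norm. Let Π : ℝ^N → ℝ^n be Lipschitz with constant L_Π, let Ψ : ℝ^n → ℝ^N satisfy Π(Ψ(y)) = y for all y, and let e : ℝ^m → ℝ be a nonnegative function that is Lipschitz with constant L_e. Let x_cl ∈ ℝ^N, x_d ∈ ℝ^n, u_d ∈ ℝ^m satisfy the tracking bound ‖x_cl − Ψ(x_d)‖ ≤ e(u_d). Let c_1, …, c_k ∈ ℝ^n and d_1, …, d_k ∈ ℝ. If for every i, ⟨c_i, x_d⟩ + L_Π (L_e ‖u_d‖ + e(0)) ‖c_i‖ ≤ d_i, then ⟨c_i, Π(x_cl)⟩ ≤ d_i for every i. -/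
open scoped RealInnerProductSpace

/-- Lemma 2 (state constraint satisfaction): with Euclidean norms on the full and planning
state spaces and the sup norm on the planning input space, if the projection `proj` (the
paper's `Π`) is Lipschitz, `Ψ` (here `emb`) is a right inverse of `proj`, the
tracking-certificate bound `e` is nonnegative and Lipschitz, and the closed-loop state
satisfies `‖x_cl - Ψ(x_d)‖ ≤ e(u_d)`, then tightening each state polytope constraint
`⟨c_i, ·⟩ ≤ d_i` by `L_Π (L_e ‖u_d‖ + e(0)) ‖c_i‖` at `x_d` guarantees
`⟨c_i, proj(x_cl)⟩ ≤ d_i` for every `i`. -/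
theorem state_constraint_satisfaction
    {N n m k : ℕ}
    (proj : EuclideanSpace ℝ (Fin N) → EuclideanSpace ℝ (Fin n))
    (emb : EuclideanSpace ℝ (Fin n) → EuclideanSpace ℝ (Fin N))
    (e : (Fin m → ℝ) → ℝ)
    (Lproj Le : ℝ) (hLproj : 0 ≤ Lproj) (hLe : 0 ≤ Le)
    (hproj : ∀ x y, ‖proj x - proj y‖ ≤ Lproj * ‖x - y‖)
    (hright : ∀ y, proj (emb y) = y)
    (he_nonneg : ∀ u, 0 ≤ e u)
    (he : ∀ u u', |e u - e u'| ≤ Le * ‖u - u'‖)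
    (xcl : EuclideanSpace ℝ (Fin N)) (xd : EuclideanSpace ℝ (Fin n)) (ud : Fin m → ℝ)
    (htrack : ‖xcl - emb xd‖ ≤ e ud)
    (c : Fin k → EuclideanSpace ℝ (Fin n)) (d : Fin k → ℝ)
    (hcon : ∀ i, ⟪c i, xd⟫ + Lproj * (Le * ‖ud‖ + e 0) * ‖c i‖ ≤ d i) :
    ∀ i, ⟪c i, proj xcl⟫ ≤ d i := by
  intro i
  have hd : ‖proj xcl - xd‖ ≤ Lproj * (Le * ‖ud‖ + e 0) := by
    have h1 : ‖proj xcl - xd‖ ≤ Lproj * e ud := by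
      have := hproj xcl (emb xd)
      rw [hright] at this
      exact this.trans (by nlinarith [htrack])
    have h2 : e ud ≤ Le * ‖ud‖ + e 0 := by
      have := he ud 0
      have := abs_le.mp this
      simp at this ⊢
      linarith [this.2]
    nlinarith
  have key : ⟪c i, proj xcl⟫ ≤ ⟪c i, xd⟫ + ‖c i‖ * ‖proj xcl - xd‖ := by
    have : ⟪c i, proj xcl⟫ - ⟪c i, xd⟫ = ⟪c i, proj xcl - xd⟫ := by
      rw [inner_sub_right]
    have hcs := abs_real_inner_le_norm (c i) (proj xcl - xd)
    have := abs_le.mp hcs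
    linarith [this.2]
  have := hcon i
  nlinarith [norm_nonneg (c i)]
end
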